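/- Let X and Y be connected finite polyhedra and let f: X → D_n(Y) be an n-valued map. Then f has a proper partition if and only if there exist positive integers m and l with m + l = n and a continuous map f̂: X → D_{m,l}(Y) with t_{m,l} ∘ f̂ = f. -/

import Mathlib

open Function Set

/-- The ordered configuration space of `n` points in `Y`. -/
def OrdConf (n : ℕ) (Y : Type*) [TopologicalSpace Y] : Type _ :=
  {y : Fin n → Y // Function.Injective y}

instance (n : ℕ) (Y : Type*) [TopologicalSpace Y] : TopologicalSpace (OrdConf n Y) :=
  instTopologicalSpaceSubtype

/-- Two ordered configurations are equivalent when they differ by a permutation. -/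
def confSetoid (n : ℕ) (Y : Type*) [TopologicalSpace Y] : Setoid (OrdConf n Y) where
  r a b := ∃ σ : Equiv.Perm (Fin n), a.1 ∘ σ = b.1
  iseqv := by
    constructor
    · intro a; exact ⟨Equiv.refl _, rfl⟩
    · rintro a b ⟨σ, h⟩
      refine ⟨σ.symm, funext fun i => ?_⟩
      have := congrFun h (σ.symm i)
      simpa using this.symm
    · rintro a b c ⟨σ, h1⟩ ⟨τ, h2⟩
      refine ⟨τ.trans σ, funext fun i => ?_⟩
      have h1' := congrFun h1 (τ i)
      have h2' := congrFun h2 i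
      simp only [Function.comp_apply] at h1' h2' ⊢
      simp [Equiv.trans_apply, h1', h2']

/-- The unordered configuration space `D_n(Y)` of `n` points in `Y`,
with the quotient topology. -/
def UnordConf (n : ℕ) (Y : Type*) [TopologicalSpace Y] : Type _ :=
  Quotient (confSetoid n Y)

instance (n : ℕ) (Y : Type*) [TopologicalSpace Y] : TopologicalSpace (UnordConf n Y) :=
  instTopologicalSpaceQuotient

/-- The underlying `n`-element subset of `Y` determined by an unordered configuration. -/
def UnordConf.values {n : ℕ} {Y : Type*} [TopologicalSpace Y] : UnordConf n Y → Set Y :=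
  Quotient.lift (fun a => Set.range a.1) (by
    rintro a b ⟨σ, h⟩
    show Set.range a.1 = Set.range b.1
    rw [← h, Set.range_comp]
    simp)

/-- An `n`-valued map from `X` to `Y` is a continuous map `X → D_n(Y)`. -/
abbrev NValuedMap (X Y : Type*) [TopologicalSpace X] [TopologicalSpace Y] (n : ℕ) :=
  C(X, UnordConf n Y)

/-- `g` is a submap of `f` when `g(x) ⊆ f(x)` for all `x`. -/
def IsSubmap {X Y : Type*} [TopologicalSpace X] [TopologicalSpace Y] {k n : ℕ}
    (g : NValuedMap X Y k) (f : NValuedMap X Y n) : Prop :=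
  ∀ x : X, (g x).values ⊆ (f x).values

/-- An `n`-valued map is irreducible when it admits no proper (`k`-valued, `0 < k < n`) submap. -/
def IsIrreducibleNV {X Y : Type*} [TopologicalSpace X] [TopologicalSpace Y] {n : ℕ}
    (f : NValuedMap X Y n) : Prop :=
  ¬ ∃ (k : ℕ) (g : NValuedMap X Y k), 0 < k ∧ k < n ∧ IsSubmap g f

/-- A partition of an `n`-valued map `f` into `l` multimaps:
a family of `kᵢ`-valued maps with `k₁ + ⋯ + k_l = n` whose values unite to those of `f`. -/
structure NVPartition {X Y : Type*} [TopologicalSpace X] [TopologicalSpace Y] {n : ℕ}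
    (f : NValuedMap X Y n) (l : ℕ) where
  card : Fin l → ℕ
  card_pos : ∀ i, 0 < card i
  maps : ∀ i, NValuedMap X Y (card i)
  sum_card : ∑ i, card i = n
  values_eq : ∀ x : X, (f x).values = ⋃ i, UnordConf.values ((maps i) x)

/-- A partition is into irreducibles when every member is irreducible. -/
def NVPartition.IsIrreduciblePartition {X Y : Type*} [TopologicalSpace X] [TopologicalSpace Y]
    {n : ℕ} {f : NValuedMap X Y n} {l : ℕ} (P : NVPartition f l) : Prop :=
  ∀ i, IsIrreducibleNV (P.maps i)

/-- A space is a (compact) finite polyhedron when it is homeomorphic to the underlying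
space of a finite simplicial complex in some Euclidean space. -/
def IsFinitePolyhedron (X : Type*) [TopologicalSpace X] : Prop :=
  ∃ (N : ℕ) (K : Geometry.SimplicialComplex ℝ (EuclideanSpace ℝ (Fin N))),
    K.faces.Finite ∧ Nonempty (X ≃ₜ K.space)
/-- Setoid identifying ordered configurations that differ by a permutation preserving
the block `{i : i < m}` (and hence its complement). -/
def mixedSetoid (n m : ℕ) (Y : Type*) [TopologicalSpace Y] : Setoid (OrdConf n Y) where
  r a b := ∃ ρ : Equiv.Perm (Fin n), (∀ i, ((ρ i : ℕ) < m ↔ (i : ℕ) < m)) ∧ a.1 ∘ ρ = b.1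
  iseqv := by
    constructor
    · intro a; exact ⟨Equiv.refl _, fun i => Iff.rfl, rfl⟩
    · rintro a b ⟨ρ, hρ, h⟩
      refine ⟨ρ.symm, fun i => ?_, funext fun i => ?_⟩
      · have := hρ (ρ.symm i)
        simpa using this.symm
      · have := congrFun h (ρ.symm i)
        simpa using this.symm
    · rintro a b c ⟨ρ₁, hρ₁, h1⟩ ⟨ρ₂, hρ₂, h2⟩
      refine ⟨ρ₂.trans ρ₁, fun i => ?_, funext fun i => ?_⟩
      · simpa [Equiv.trans_apply] using (hρ₁ (ρ₂ i)).trans (hρ₂ i)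
      · have h1' := congrFun h1 (ρ₂ i)
        have h2' := congrFun h2 i
        simp only [Function.comp_apply] at h1' h2' ⊢
        simp [Equiv.trans_apply, h1', h2']

/-- The mixed configuration space `D_{m, n-m}(Y)`. -/
def MixedConf (n m : ℕ) (Y : Type*) [TopologicalSpace Y] : Type _ :=
  Quotient (mixedSetoid n m Y)

instance (n m : ℕ) (Y : Type*) [TopologicalSpace Y] : TopologicalSpace (MixedConf n m Y) :=
  instTopologicalSpaceQuotient

/-- The covering `s : F_n(Y) → D_{m,n-m}(Y)`. -/
def sMap (n m : ℕ) (Y : Type*) [TopologicalSpace Y] : OrdConf n Y → MixedConf n m Y :=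
  Quotient.mk (mixedSetoid n m Y)

/-- The covering `t : D_{m,n-m}(Y) → D_n(Y)` forgetting the block structure. -/
def tMap (n m : ℕ) (Y : Type*) [TopologicalSpace Y] : MixedConf n m Y → UnordConf n Y :=
  Quotient.lift (Quotient.mk (confSetoid n Y)) (by
    rintro a b ⟨ρ, -, h⟩
    exact Quotient.sound ⟨ρ, h⟩)

/-- `t` as a continuous map. -/
def tCMap (n m : ℕ) (Y : Type*) [TopologicalSpace Y] : C(MixedConf n m Y, UnordConf n Y) :=
  ⟨tMap n m Y, Continuous.quotient_lift continuous_quotient_mk' _⟩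

/-- `f` has a proper partition: a partition into at least two multimaps. -/
def HasProperPartition {X Y : Type*} [TopologicalSpace X] [TopologicalSpace Y] {n : ℕ}
    (f : NValuedMap X Y n) : Prop :=
  ∃ l : ℕ, 2 ≤ l ∧ Nonempty (NVPartition f l)

section Helpers

open scoped Classical Topology

variable {Y : Type*} [TopologicalSpace Y]

lemma values_mk {n : ℕ} (a : OrdConf n Y) :
    UnordConf.values (Quotient.mk (confSetoid n Y) a) = Set.range a.1 := rfl

lemma unordConf_eq_of_range_eq {n : ℕ} {a b : OrdConf n Y}
    (h : Set.range a.1 = Set.range b.1) :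
    Quotient.mk (confSetoid n Y) a = Quotient.mk (confSetoid n Y) b := by
  have hex : ∀ j, ∃ i, a.1 i = b.1 j := by
    intro j
    have : b.1 j ∈ Set.range a.1 := h ▸ Set.mem_range_self j
    exact this
  choose τ hτ using hex
  have hinj : Function.Injective τ := by
    intro i j hij
    apply b.2
    rw [← hτ i, ← hτ j, hij]
  refine Quotient.sound ⟨Equiv.ofBijective τ (Finite.injective_iff_bijective.mp hinj), ?_⟩
  exact funext hτ

lemma exists_values_finset {n : ℕ} (d : UnordConf n Y) :
    ∃ s : Finset Y, s.card = n ∧ ↑s = d.values := by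
  induction d using Quotient.ind with
  | _ a =>
    refine ⟨Finset.univ.image a.1, ?_, ?_⟩
    · rw [Finset.card_image_of_injective _ a.2, Finset.card_univ, Fintype.card_fin]
    · rw [Finset.coe_image, Finset.coe_univ, Set.image_univ, values_mk]

lemma isOpen_values_subset {n : ℕ} {O : Set Y} (hO : IsOpen O) :
    IsOpen {d : UnordConf n Y | d.values ⊆ O} := by
  apply isOpen_coinduced.mpr
  show IsOpen ((Quotient.mk (confSetoid n Y)) ⁻¹' {d : UnordConf n Y | d.values ⊆ O})
  have : (Quotient.mk (confSetoid n Y)) ⁻¹' {d : UnordConf n Y | d.values ⊆ O}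
      = ⋂ i : Fin n, (fun a : OrdConf n Y => a.1 i) ⁻¹' O := by
    ext a
    show Set.range a.1 ⊆ O ↔ _
    rw [Set.range_subset_iff]
    simp only [Set.mem_iInter, Set.mem_preimage]
  rw [this]
  exact isOpen_iInter_of_finite fun i =>
    hO.preimage ((continuous_apply i).comp continuous_subtype_val)

lemma isOpen_values_inter_nonempty {n : ℕ} {O : Set Y} (hO : IsOpen O) :
    IsOpen {d : UnordConf n Y | (d.values ∩ O).Nonempty} := by
  apply isOpen_coinduced.mpr
  show IsOpen ((Quotient.mk (confSetoid n Y)) ⁻¹' {d : UnordConf n Y | (d.values ∩ O).Nonempty})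
  have : (Quotient.mk (confSetoid n Y)) ⁻¹' {d : UnordConf n Y | (d.values ∩ O).Nonempty}
      = ⋃ i : Fin n, (fun a : OrdConf n Y => a.1 i) ⁻¹' O := by
    ext a
    show (Set.range a.1 ∩ O).Nonempty ↔ _
    simp only [Set.mem_iUnion, Set.mem_preimage]
    constructor
    · rintro ⟨y, ⟨i, rfl⟩, hyO⟩
      exact ⟨i, hyO⟩
    · rintro ⟨i, hi⟩
      exact ⟨a.1 i, Set.mem_range_self i, hi⟩
  rw [this]
  exact isOpen_iUnion fun i =>
    hO.preimage ((continuous_apply i).comp continuous_subtype_val)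

lemma exists_unique_of_counting {k : ℕ} (s : Finset Y) (hcard : s.card = k)
    (U : Fin k → Set Y) (hdisj : Pairwise (Function.onFun Disjoint U))
    (hsub : ↑s ⊆ ⋃ i, U i) (hmeet : ∀ i, ∃ y ∈ s, y ∈ U i) :
    ∀ i, ∃! y, y ∈ s ∧ y ∈ U i := by
  set part : Fin k → Finset Y := fun i => s.filter (· ∈ U i) with hpart
  have hmem : ∀ i y, y ∈ part i ↔ y ∈ s ∧ y ∈ U i := by
    intro i y; simp [hpart]
  have hpos : ∀ i, 1 ≤ (part i).card := fun i => by
    obtain ⟨y, hy, hyU⟩ := hmeet i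
    exact Finset.card_pos.mpr ⟨y, (hmem i y).mpr ⟨hy, hyU⟩⟩
  have hdisj' : ∀ i ∈ (Finset.univ : Finset (Fin k)), ∀ j ∈ Finset.univ, i ≠ j →
      Disjoint (part i) (part j) := by
    intro i _ j _ hij
    rw [Finset.disjoint_left]
    intro y hyi hyj
    exact Set.disjoint_left.mp (hdisj hij) ((hmem i y).mp hyi).2 ((hmem j y).mp hyj).2
  have hcover : s = Finset.univ.biUnion part := by
    ext y
    simp only [Finset.mem_biUnion, Finset.mem_univ, true_and]
    constructor
    · intro hy
      obtain ⟨i, hi⟩ := Set.mem_iUnion.mp (hsub hy)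
      exact ⟨i, (hmem i y).mpr ⟨hy, hi⟩⟩
    · rintro ⟨i, hi⟩
      exact ((hmem i y).mp hi).1
  have hsum : ∑ i, (part i).card = k := by
    rw [← Finset.card_biUnion hdisj', ← hcover, hcard]
  have hone : ∀ i, (part i).card = 1 := by
    intro i
    by_contra hne
    have h2 : 2 ≤ (part i).card := by have := hpos i; omega
    have hlt : ∑ _j : Fin k, 1 < ∑ j, (part j).card :=
      Finset.sum_lt_sum (fun j _ => hpos j) ⟨i, Finset.mem_univ i, by omega⟩
    simp only [Finset.sum_const, Finset.card_univ, Fintype.card_fin, smul_eq_mul,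
      mul_one] at hlt
    omega
  intro i
  obtain ⟨y, hy⟩ := Finset.card_eq_one.mp (hone i)
  refine ⟨y, ?_, ?_⟩
  · have : y ∈ part i := by rw [hy]; exact Finset.mem_singleton_self y
    exact (hmem i y).mp this
  · intro z hz
    have : z ∈ part i := (hmem i z).mpr hz
    rw [hy, Finset.mem_singleton] at this
    exact this

/-- `z` realizes the pair `(c, d)`: some ordered representative of `z` represents `d`
and its first `m` coordinates are exactly the values of `c`. -/
def Realizes {n m : ℕ} (c : UnordConf m Y) (d : UnordConf n Y) (z : MixedConf n m Y) : Prop :=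
  ∃ a : OrdConf n Y, Quotient.mk (mixedSetoid n m Y) a = z ∧
    Quotient.mk (confSetoid n Y) a = d ∧ ∀ i : Fin n, (a.1 i ∈ c.values ↔ (i : ℕ) < m)

lemma realizes_unique {n m : ℕ} {c : UnordConf m Y} {d : UnordConf n Y}
    {z z' : MixedConf n m Y} (h : Realizes c d z) (h' : Realizes c d z') : z = z' := by
  obtain ⟨a, rfl, hd, hc⟩ := h
  obtain ⟨a', rfl, hd', hc'⟩ := h'
  obtain ⟨σ, hσ⟩ := Quotient.exact (hd.trans hd'.symm)
  refine Quotient.sound ⟨σ, fun i => ?_, hσ⟩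
  have hi := congrFun hσ i
  simp only [Function.comp_apply] at hi
  rw [← hc (σ i), hi, hc' i]

lemma realizes_exists {n m : ℕ} (hmn : m ≤ n) (c : UnordConf m Y) (d : UnordConf n Y)
    (hsub : c.values ⊆ d.values) : ∃ z, Realizes c d z := by
  induction d using Quotient.ind with
  | _ b =>
  obtain ⟨s, hs, hsv⟩ := exists_values_finset c
  have hrange : c.values ⊆ Set.range b.1 := by rwa [values_mk] at hsub
  set q : Fin n → Prop := fun i => b.1 i ∈ c.values with hqdef
  set p : Fin n → Prop := fun i => (i : ℕ) < m with hpdef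
  have hq : Fintype.card {i // q i} = m := by
    rw [Fintype.card_subtype]
    have himg : (Finset.univ.filter q).image b.1 = s := by
      ext y
      simp only [Finset.mem_image, Finset.mem_filter, Finset.mem_univ, true_and]
      constructor
      · rintro ⟨i, hqi, rfl⟩
        rw [← Finset.mem_coe, hsv]; exact hqi
      · intro hy
        have hyc : y ∈ c.values := by rw [← hsv]; exact_mod_cast hy
        obtain ⟨i, rfl⟩ := hrange hyc
        exact ⟨i, hyc, rfl⟩
    calc (Finset.univ.filter q).card = ((Finset.univ.filter q).image b.1).card :=
          (Finset.card_image_of_injective _ b.2).symm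
      _ = m := by rw [himg, hs]
  have hp : Fintype.card {i // p i} = m := by
    have : Fintype.card {i : Fin n // p i} = Fintype.card (Fin m) := by
      apply Fintype.card_congr
      exact ⟨fun x => ⟨(x.1 : ℕ), x.2⟩, fun j => ⟨⟨(j : ℕ), lt_of_lt_of_le j.2 hmn⟩, j.2⟩,
        fun x => by ext; rfl, fun j => by ext; rfl⟩
    rw [this, Fintype.card_fin]
  have hpc : Fintype.card {i // ¬ p i} = n - m := by
    rw [Fintype.card_subtype_compl, hp, Fintype.card_fin]
  have hqc : Fintype.card {i // ¬ q i} = n - m := by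
    rw [Fintype.card_subtype_compl, hq, Fintype.card_fin]
  let e₁ : {i // p i} ≃ {i // q i} := Fintype.equivOfCardEq (hp.trans hq.symm)
  let e₂ : {i // ¬ p i} ≃ {i // ¬ q i} := Fintype.equivOfCardEq (hpc.trans hqc.symm)
  let σ : Equiv.Perm (Fin n) := Equiv.subtypeCongr e₁ e₂
  have hσ : ∀ i, q (σ i) ↔ p i := by
    intro i
    by_cases h : p i
    · have : σ i = (e₁ ⟨i, h⟩ : Fin n) := by
        simp [σ, Equiv.subtypeCongr, h]
      rw [this]
      exact iff_of_true (e₁ ⟨i, h⟩).2 h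
    · have : σ i = (e₂ ⟨i, h⟩ : Fin n) := by
        simp [σ, Equiv.subtypeCongr, h]
      rw [this]
      exact iff_of_false (e₂ ⟨i, h⟩).2 h
  refine ⟨Quotient.mk (mixedSetoid n m Y) ⟨b.1 ∘ σ, b.2.comp σ.injective⟩, ?_⟩
  refine ⟨⟨b.1 ∘ σ, b.2.comp σ.injective⟩, rfl, ?_, fun i => hσ i⟩
  symm
  exact Quotient.sound ⟨σ, rfl⟩

/-- Restriction of an ordered configuration to the first `m` coordinates. -/
def restFirst {n m : ℕ} (h : m ≤ n) (a : OrdConf n Y) : OrdConf m Y :=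
  ⟨a.1 ∘ Fin.castLE h, a.2.comp (Fin.castLE_injective h)⟩

/-- The inclusion of the last block of indices. -/
def embLast {n m : ℕ} (h : m ≤ n) (i : Fin (n - m)) : Fin n :=
  ⟨m + (i : ℕ), by omega⟩

lemma embLast_injective {n m : ℕ} (h : m ≤ n) : Function.Injective (embLast (n := n) h) := by
  intro i j hij
  have : m + (i : ℕ) = m + (j : ℕ) := congrArg Fin.val hij
  exact Fin.ext (by omega)

/-- Restriction of an ordered configuration to the last `n - m` coordinates. -/
def restLast {n m : ℕ} (h : m ≤ n) (a : OrdConf n Y) : OrdConf (n - m) Y :=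
  ⟨a.1 ∘ embLast h, a.2.comp (embLast_injective h)⟩

lemma continuous_restFirst {n m : ℕ} (h : m ≤ n) :
    Continuous (restFirst (Y := Y) h) := by
  apply Continuous.subtype_mk
  exact continuous_pi fun i => (continuous_apply _).comp continuous_subtype_val

lemma continuous_restLast {n m : ℕ} (h : m ≤ n) :
    Continuous (restLast (Y := Y) h) := by
  apply Continuous.subtype_mk
  exact continuous_pi fun i => (continuous_apply _).comp continuous_subtype_val

/-- The first-block projection `D_{m,n-m}(Y) → D_m(Y)`. -/
def gFirst {n m : ℕ} (h : m ≤ n) : MixedConf n m Y → UnordConf m Y :=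
  Quotient.lift (fun a => Quotient.mk (confSetoid m Y) (restFirst h a)) (by
    rintro a b ⟨ρ, hρ, hab⟩
    apply Quotient.sound
    have hinj : Function.Injective
        (fun i : Fin m => (⟨(ρ (Fin.castLE h i) : Fin n).1, (hρ _).mpr i.2⟩ : Fin m)) := by
      intro i j hij
      have hv : ((ρ (Fin.castLE h i) : Fin n) : ℕ) = ((ρ (Fin.castLE h j) : Fin n) : ℕ) := by
        simpa using hij
      have h2 : Fin.castLE h i = Fin.castLE h j := ρ.injective (Fin.ext hv)
      exact Fin.castLE_injective h h2
    refine ⟨Equiv.ofBijective _ (Finite.injective_iff_bijective.mp hinj), funext fun i => ?_⟩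
    show a.1 (Fin.castLE h ⟨(ρ (Fin.castLE h i) : Fin n).1, _⟩) = b.1 (Fin.castLE h i)
    have hcast : Fin.castLE h (⟨(ρ (Fin.castLE h i) : Fin n).1, (hρ _).mpr i.2⟩ : Fin m)
        = ρ (Fin.castLE h i) := Fin.ext rfl
    rw [hcast]
    exact congrFun hab (Fin.castLE h i))

/-- The last-block projection `D_{m,n-m}(Y) → D_{n-m}(Y)`. -/
def gLast {n m : ℕ} (h : m ≤ n) : MixedConf n m Y → UnordConf (n - m) Y :=
  Quotient.lift (fun a => Quotient.mk (confSetoid (n - m) Y) (restLast h a)) (by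
    rintro a b ⟨ρ, hρ, hab⟩
    apply Quotient.sound
    have hge : ∀ i : Fin (n - m), m ≤ ((ρ (embLast h i) : Fin n) : ℕ) := by
      intro i
      by_contra hlt
      push_neg at hlt
      have := (hρ (embLast h i)).mp hlt
      have hv : ((embLast h i : Fin n) : ℕ) = m + (i : ℕ) := rfl
      omega
    have hinj : Function.Injective
        (fun i : Fin (n - m) => (⟨((ρ (embLast h i) : Fin n) : ℕ) - m,
          by have := (ρ (embLast h i)).2; have := hge i; omega⟩ : Fin (n - m))) := by
      intro i j hij
      have hv : ((ρ (embLast h i) : Fin n) : ℕ) - m = ((ρ (embLast h j) : Fin n) : ℕ) - m := by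
        simpa using hij
      have : ((ρ (embLast h i) : Fin n) : ℕ) = ((ρ (embLast h j) : Fin n) : ℕ) := by
        have := hge i; have := hge j; omega
      exact embLast_injective h (ρ.injective (Fin.ext this))
    refine ⟨Equiv.ofBijective _ (Finite.injective_iff_bijective.mp hinj), funext fun i => ?_⟩
    show a.1 (embLast h ⟨((ρ (embLast h i) : Fin n) : ℕ) - m, _⟩) = b.1 (embLast h i)
    have hcast : embLast h (⟨((ρ (embLast h i) : Fin n) : ℕ) - m,
          by have := (ρ (embLast h i)).2; have := hge i; omega⟩ : Fin (n - m))
        = ρ (embLast h i) := by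
      apply Fin.ext
      show m + (((ρ (embLast h i) : Fin n) : ℕ) - m) = ((ρ (embLast h i) : Fin n) : ℕ)
      have := hge i; omega
    rw [hcast]
    exact congrFun hab (embLast h i))

lemma continuous_gFirst {n m : ℕ} (h : m ≤ n) : Continuous (gFirst (Y := Y) h) :=
  Continuous.quotient_lift (continuous_quotient_mk'.comp (continuous_restFirst h)) _

lemma continuous_gLast {n m : ℕ} (h : m ≤ n) : Continuous (gLast (Y := Y) h) :=
  Continuous.quotient_lift (continuous_quotient_mk'.comp (continuous_restLast h)) _

lemma tMap_values {n m : ℕ} (h : m ≤ n) (z : MixedConf n m Y) :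
    (tMap n m Y z).values = (gFirst h z).values ∪ (gLast h z).values := by
  induction z using Quotient.ind with
  | _ a =>
    show Set.range a.1 = Set.range (a.1 ∘ Fin.castLE h) ∪ Set.range (a.1 ∘ embLast h)
    ext y
    simp only [Set.mem_range, Set.mem_union, Function.comp_apply]
    constructor
    · rintro ⟨i, rfl⟩
      by_cases hi : (i : ℕ) < m
      · exact Or.inl ⟨⟨(i : ℕ), hi⟩, congrArg a.1 (Fin.ext rfl)⟩
      · refine Or.inr ⟨⟨(i : ℕ) - m, by have := i.2; omega⟩, congrArg a.1 (Fin.ext ?_)⟩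
        simp only [embLast]
        omega
    · rintro (⟨j, rfl⟩ | ⟨j, rfl⟩) <;> exact ⟨_, rfl⟩

lemma exists_disjoint_opens {n : ℕ} [T2Space Y] (a : OrdConf n Y) :
    ∃ V : Fin n → Set Y, (∀ i, a.1 i ∈ V i ∧ IsOpen (V i)) ∧
      Pairwise (Function.onFun Disjoint V) := by
  have hd : Pairwise (Function.onFun Disjoint (fun i => 𝓝 (a.1 i))) := by
    intro i j hij
    exact pairwise_disjoint_nhds (a.2.ne hij)
  obtain ⟨V, hV, hVd⟩ := hd.exists_mem_filter_basis_of_disjoint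
    (fun i => nhds_basis_opens (a.1 i))
  exact ⟨V, hV, hVd⟩

end Helpers
theorem statement_3 {X Y : Type*} [TopologicalSpace X] [TopologicalSpace Y]
    [ConnectedSpace X] [ConnectedSpace Y]
    (hX : IsFinitePolyhedron X) (hY : IsFinitePolyhedron Y)
    {n : ℕ} (f : NValuedMap X Y n) :
    HasProperPartition f ↔
      ∃ m l : ℕ, 0 < m ∧ 0 < l ∧ m + l = n ∧
        ∃ fhat : C(X, MixedConf n m Y), ∀ x : X, tMap n m Y (fhat x) = f x := by
  classical
  have hT2 : T2Space Y := by
    obtain ⟨N, K, -, ⟨e⟩⟩ := hY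
    exact e.isEmbedding.t2Space
  constructor
  · rintro ⟨l, hl, ⟨P⟩⟩
    set i0 : Fin l := ⟨0, by omega⟩ with hi0
    set i1 : Fin l := ⟨1, by omega⟩ with hi1
    set m : ℕ := P.card i0 with hmdef
    have hmpos : 0 < m := P.card_pos i0
    have hmn' : m < n := by
      have hne : i0 ≠ i1 := by
        intro h
        have : (0 : ℕ) = 1 := congrArg Fin.val h
        omega
      have hsub : ({i0, i1} : Finset (Fin l)) ⊆ Finset.univ := Finset.subset_univ _
      have hle : ∑ i ∈ ({i0, i1} : Finset (Fin l)), P.card i ≤ ∑ i, P.card i :=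
        Finset.sum_le_sum_of_subset hsub
      rw [Finset.sum_pair hne, P.sum_card] at hle
      have := P.card_pos i1
      omega
    have hmn : m ≤ n := le_of_lt hmn'
    set f₁ : NValuedMap X Y m := P.maps i0 with hf1
    have hsubv : ∀ x : X, (f₁ x).values ⊆ (f x).values := by
      intro x
      rw [P.values_eq x]
      exact Set.subset_iUnion (fun i => UnordConf.values ((P.maps i) x)) i0
    have hEx : ∀ x : X, ∃ z, Realizes (f₁ x) (f x) z :=
      fun x => realizes_exists hmn (f₁ x) (f x) (hsubv x)
    set F : X → MixedConf n m Y := fun x => (hEx x).choose with hFdef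
    have hF : ∀ x, Realizes (f₁ x) (f x) (F x) := fun x => (hEx x).choose_spec
    have hcont : Continuous F := by
      rw [continuous_iff_continuousAt]
      intro x₀
      rw [ContinuousAt, tendsto_nhds]
      intro W hWopen hWmem
      obtain ⟨a, haz, had, hac⟩ := hF x₀
      -- the saturated open preimage of W
      set W' : Set (OrdConf n Y) := Quotient.mk (mixedSetoid n m Y) ⁻¹' W with hW'
      have hW'open : IsOpen W' := hWopen.preimage continuous_quotient_mk'
      have haW' : a ∈ W' := by
        rw [hW']
        show Quotient.mk (mixedSetoid n m Y) a ∈ W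
        rw [haz]; exact hWmem
      -- a box neighborhood of a inside W'
      obtain ⟨T, hTopen, hTW⟩ := isOpen_induced_iff.mp hW'open
      have haT : a.1 ∈ T := by
        have : a ∈ (Subtype.val ⁻¹' T : Set (OrdConf n Y)) := hTW.symm ▸ haW'
        exact this
      obtain ⟨I, u, hu, hsubT⟩ := (isOpen_pi_iff.mp hTopen) a.1 haT
      set U : Fin n → Set Y := fun i => if i ∈ I then u i else Set.univ with hUdef
      have hUopen : ∀ i, IsOpen (U i) := by
        intro i
        by_cases hi : i ∈ I
        · simpa [hUdef, hi] using (hu i hi).1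
        · simp [hUdef, hi]
      have haU : ∀ i, a.1 i ∈ U i := by
        intro i
        by_cases hi : i ∈ I
        · simpa [hUdef, hi] using (hu i hi).2
        · simp [hUdef, hi]
      have hboxT : ∀ g : Fin n → Y, (∀ i, g i ∈ U i) → g ∈ T := by
        intro g hg
        apply hsubT
        intro i hi
        have hi' : i ∈ I := hi
        have h2 := hg i
        simp only [hUdef] at h2
        rwa [if_pos hi'] at h2
      -- disjoint open sets
      obtain ⟨V, hV, hVdisj⟩ := exists_disjoint_opens a
      set U' : Fin n → Set Y := fun i => U i ∩ V i with hU'def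
      have hU'open : ∀ i, IsOpen (U' i) := fun i => (hUopen i).inter (hV i).2
      have haU' : ∀ i, a.1 i ∈ U' i := fun i => ⟨haU i, (hV i).1⟩
      have hU'disj : Pairwise (Function.onFun Disjoint U') := by
        intro i j hij
        exact ((hVdisj hij).mono (Set.inter_subset_right) (Set.inter_subset_right))
      -- the open neighborhood of x₀
      set G : Set X :=
        (f ⁻¹' {d : UnordConf n Y | d.values ⊆ ⋃ i, U' i}) ∩
        (⋂ i : Fin n, f ⁻¹' {d : UnordConf n Y | (d.values ∩ U' i).Nonempty}) ∩
        ((f₁ ⁻¹' {c : UnordConf m Y | c.values ⊆ ⋃ j : Fin m, U' (Fin.castLE hmn j)}) ∩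
         (⋂ j : Fin m, f₁ ⁻¹' {c : UnordConf m Y | (c.values ∩ U' (Fin.castLE hmn j)).Nonempty}))
        with hGdef
      have hGopen : IsOpen G := by
        apply IsOpen.inter
        apply IsOpen.inter
        · exact (isOpen_values_subset (isOpen_iUnion hU'open)).preimage f.continuous
        · exact isOpen_iInter_of_finite fun i =>
            (isOpen_values_inter_nonempty (hU'open i)).preimage f.continuous
        apply IsOpen.inter
        · exact (isOpen_values_subset (isOpen_iUnion fun j => hU'open _)).preimage f₁.continuous
        · exact isOpen_iInter_of_finite fun j =>
            (isOpen_values_inter_nonempty (hU'open _)).preimage f₁.continuous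
      have hfval : (f x₀).values = Set.range a.1 := by
        rw [← had]; rfl
      have hx₀G : x₀ ∈ G := by
        refine ⟨⟨?_, ?_⟩, ?_, ?_⟩
        · show (f x₀).values ⊆ ⋃ i, U' i
          rw [hfval]
          rintro y ⟨i, rfl⟩
          exact Set.mem_iUnion.mpr ⟨i, haU' i⟩
        · rw [Set.mem_iInter]
          intro i
          show ((f x₀).values ∩ U' i).Nonempty
          exact ⟨a.1 i, hfval ▸ Set.mem_range_self i, haU' i⟩
        · show (f₁ x₀).values ⊆ ⋃ j : Fin m, U' (Fin.castLE hmn j)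
          intro y hy
          obtain ⟨i, rfl⟩ := hfval ▸ hsubv x₀ hy
          have hilt : (i : ℕ) < m := (hac i).mp hy
          exact Set.mem_iUnion.mpr ⟨⟨(i : ℕ), hilt⟩, by
            have : Fin.castLE hmn ⟨(i : ℕ), hilt⟩ = i := Fin.ext rfl
            rw [this]; exact haU' i⟩
        · rw [Set.mem_iInter]
          intro j
          show ((f₁ x₀).values ∩ U' (Fin.castLE hmn j)).Nonempty
          refine ⟨a.1 (Fin.castLE hmn j), ?_, haU' _⟩
          exact (hac (Fin.castLE hmn j)).mpr j.2
      have hGsub : G ⊆ F ⁻¹' W := by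
        rintro x ⟨⟨hxA, hxB⟩, hxC, hxD⟩
        rw [Set.mem_iInter] at hxB hxD
        obtain ⟨s, hs, hsv⟩ := exists_values_finset (f x)
        have hsub' : ↑s ⊆ ⋃ i, U' i := hsv ▸ hxA
        have hmeet : ∀ i, ∃ y ∈ s, y ∈ U' i := by
          intro i
          obtain ⟨y, hy, hyU⟩ := hxB i
          exact ⟨y, by rw [← Finset.mem_coe, hsv]; exact hy, hyU⟩
        have huniq := exists_unique_of_counting s hs U' hU'disj hsub' hmeet
        set b : Fin n → Y := fun i => (huniq i).exists.choose with hbdef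
        have hb : ∀ i, b i ∈ s ∧ b i ∈ U' i := fun i => (huniq i).exists.choose_spec
        have hbu : ∀ i y, y ∈ s → y ∈ U' i → y = b i := by
          intro i y hys hyU
          exact ((huniq i).unique ⟨hys, hyU⟩ (hb i))
        have hbinj : Function.Injective b := by
          intro i j hij
          by_contra hne
          exact Set.disjoint_left.mp (hU'disj hne) (hb i).2 (hij ▸ (hb j).2)
        have hbrange : Set.range b = (f x).values := by
          rw [← hsv]
          apply Set.Subset.antisymm
          · rintro y ⟨i, rfl⟩
            exact (hb i).1
          · intro y hy
            obtain ⟨i, hi⟩ := Set.mem_iUnion.mp (hsub' hy)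
            exact ⟨i, (hbu i y (by exact_mod_cast hy) hi).symm⟩
        have hmkb : Quotient.mk (confSetoid n Y) ⟨b, hbinj⟩ = f x := by
          obtain ⟨b₀, hb₀⟩ := Quotient.exists_rep (f x)
          have hr : Set.range b = Set.range b₀.1 := by
            rw [hbrange, ← hb₀]; rfl
          rw [unordConf_eq_of_range_eq (a := ⟨b, hbinj⟩) hr]
          exact hb₀
        have hprop : ∀ i : Fin n, (b i ∈ (f₁ x).values ↔ (i : ℕ) < m) := by
          intro i
          constructor
          · intro hbi
            obtain ⟨j, hj⟩ := Set.mem_iUnion.mp (hxC hbi)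
            have : i = Fin.castLE hmn j := by
              by_contra hne
              exact Set.disjoint_left.mp (hU'disj hne) (hb i).2 hj
            rw [this]
            exact j.2
          · intro hilt
            set j : Fin m := ⟨(i : ℕ), hilt⟩ with hjdef
            have hcast : Fin.castLE hmn j = i := Fin.ext rfl
            obtain ⟨y, hyc, hyU⟩ := hxD j
            have hys : y ∈ s := by
              rw [← Finset.mem_coe, hsv]
              exact hsubv x hyc
            have : y = b (Fin.castLE hmn j) := hbu _ y hys hyU
            rw [hcast] at this
            rwa [← this]
        have hreal : Realizes (f₁ x) (f x) (Quotient.mk (mixedSetoid n m Y) ⟨b, hbinj⟩) :=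
          ⟨⟨b, hbinj⟩, rfl, hmkb, hprop⟩
        have hFx : F x = Quotient.mk (mixedSetoid n m Y) ⟨b, hbinj⟩ :=
          realizes_unique (hF x) hreal
        show F x ∈ W
        rw [hFx]
        have hbW' : (⟨b, hbinj⟩ : OrdConf n Y) ∈ W' := by
          rw [hTW.symm]
          show b ∈ T
          exact hboxT b fun i => (hb i).2.1
        exact hbW'
      exact mem_nhds_iff.mpr ⟨G, hGsub, hGopen, hx₀G⟩
    refine ⟨m, n - m, hmpos, by omega, by omega, ⟨⟨F, hcont⟩, fun x => ?_⟩⟩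
    obtain ⟨a, haz, had, -⟩ := hF x
    show tMap n m Y (F x) = f x
    rw [← haz, ← had]
    rfl
  · rintro ⟨m, l, hm, hl, hml, fhat, hfh⟩
    have hmn : m ≤ n := by omega
    set g₁ : NValuedMap X Y m :=
      ⟨fun x => gFirst hmn (fhat x), (continuous_gFirst hmn).comp fhat.continuous⟩ with hg₁
    set g₂ : NValuedMap X Y (n - m) :=
      ⟨fun x => gLast hmn (fhat x), (continuous_gLast hmn).comp fhat.continuous⟩ with hg₂
    refine ⟨2, le_refl 2, ⟨{
        card := fun i => match i with | ⟨0, _⟩ => m | ⟨_+1, _⟩ => n - m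
        card_pos := ?_
        maps := fun i => match i with | ⟨0, _⟩ => g₁ | ⟨_+1, _⟩ => g₂
        sum_card := ?_
        values_eq := ?_ }⟩⟩
    · intro i
      match i with
      | ⟨0, _⟩ => exact hm
      | ⟨1, _⟩ => show 0 < n - m; omega
    · rw [Fin.sum_univ_two]
      show m + (n - m) = n
      omega
    · intro x
      rw [← hfh x, tMap_values hmn]
      apply Set.Subset.antisymm
      · rintro y (hy | hy)
        · exact Set.mem_iUnion.mpr ⟨0, hy⟩
        · exact Set.mem_iUnion.mpr ⟨1, hy⟩
      · intro y hy
        obtain ⟨i, hi⟩ := Set.mem_iUnion.mp hy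
        match i with
        | ⟨0, _⟩ => exact Or.inl hi
        | ⟨1, _⟩ => exact Or.inr hi
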